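/- Let T be the 2×2 integer matrix with entries T₁₁ = n, T₁₂ = 0, T₂₁ = 0, T₂₂ = m, where n ≥ m ≥ 2, and let D ⊆ S be a digit set with #D ≥ 2 which is not eigen-collinear. Set b₁ = (n−1, 0)ᵀ, b₂ = (0, m−1)ᵀ, b₃ = (n−1, m−1)ᵀ. If none of b₁, b₂, b₃, b₁ − b₂ belongs to ΔD, then F(T,D) is disconnected. -/

import Mathlib

open Matrix

/-- The canonical cast of an integer vector to a real vector. -/
def castVec {k : ℕ} (d : Fin k → ℤ) : Fin k → ℝ := fun i => (d i : ℝ)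

/-- The lower triangular matrix `[[n, 0], [t, m]]`, as a real matrix. -/
noncomputable def Tmat (n t m : ℤ) : Matrix (Fin 2) (Fin 2) ℝ :=
  !![(n : ℝ), 0; (t : ℝ), (m : ℝ)]

/-- `d` belongs to `S = {(i,j)ᵀ : 0 ≤ i ≤ |n|-1, 0 ≤ j ≤ |m|-1}`. -/
def InS (n m : ℤ) (d : Fin 2 → ℤ) : Prop :=
  0 ≤ d 0 ∧ d 0 ≤ |n| - 1 ∧ 0 ≤ d 1 ∧ d 1 ≤ |m| - 1

/-- `D` is eigen-collinear for `M`: there are an eigenvector `v` of `M` and `d₀ ∈ D`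
with `D - d₀ ⊆ ℝv`. -/
def EigenCollinear (M : Matrix (Fin 2) (Fin 2) ℝ) (D : Finset (Fin 2 → ℤ)) : Prop :=
  ∃ v : Fin 2 → ℝ, v ≠ 0 ∧ (∃ μ : ℝ, M *ᵥ v = μ • v) ∧
    ∃ d₀ ∈ D, ∀ d ∈ D, ∃ c : ℝ, castVec d - castVec d₀ = c • v

/-- `a ∈ ΔD = D - D`. -/
def InDelta (D : Finset (Fin 2 → ℤ)) (a : Fin 2 → ℤ) : Prop :=
  ∃ d ∈ D, ∃ d' ∈ D, a = d - d'

/-- For `T = [[n,0],[0,m]]` with `n ≥ m ≥ 2` and a digit set `D ⊆ S`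
with `#D ≥ 2` that is not eigen-collinear, with `b₁ = (n-1,0)ᵀ`, `b₂ = (0,m-1)ᵀ`,
`b₃ = (n-1,m-1)ᵀ`: if none of `b₁, b₂, b₃, b₁ - b₂` belongs to `ΔD`, then the attractor
`F(T,D)` (the unique nonempty compact set with `F = ⋃_{d ∈ D} T⁻¹(F + d)`) is
disconnected. -/
theorem stmt7 (n m : ℤ) (hnm : m ≤ n) (hm : 2 ≤ m)
    (D : Finset (Fin 2 → ℤ)) (hDS : ∀ d ∈ D, InS n m d) (hq : 2 ≤ D.card)
    (hec : ¬ EigenCollinear (Tmat n 0 m) D)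
    (F : Set (Fin 2 → ℝ)) (hne : F.Nonempty) (hcpt : IsCompact F)
    (hfix : F = ⋃ d ∈ D, (fun x => (Tmat n 0 m)⁻¹ *ᵥ (x + castVec d)) '' F)
    (hb1 : ¬ InDelta D ![n - 1, 0]) (hb2 : ¬ InDelta D ![0, m - 1])
    (hb3 : ¬ InDelta D ![n - 1, m - 1])
    (hb12 : ¬ InDelta D (![n - 1, 0] - ![0, m - 1])) :
    ¬ IsConnected F := by
  classical
  intro hconn
  have hn : (2:ℤ) ≤ n := hm.trans hnm
  have hnR : (2:ℝ) ≤ (n:ℝ) := by exact_mod_cast hn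
  have hmR : (2:ℝ) ≤ (m:ℝ) := by exact_mod_cast hm
  have hdet : IsUnit (Tmat n 0 m).det := by
    have h1 : (Tmat n 0 m).det = (n:ℝ) * (m:ℝ) := by
      simp [Tmat, Matrix.det_fin_two_of]
    rw [h1]
    exact isUnit_iff_ne_zero.mpr (by nlinarith)
  have hTT : ∀ w : Fin 2 → ℝ, Tmat n 0 m *ᵥ ((Tmat n 0 m)⁻¹ *ᵥ w) = w := by
    intro w
    rw [Matrix.mulVec_mulVec, Matrix.mul_nonsing_inv _ hdet, Matrix.one_mulVec]
  have hT0 : ∀ w : Fin 2 → ℝ, (Tmat n 0 m *ᵥ w) 0 = (n:ℝ) * w 0 := by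
    intro w
    simp [Tmat, Matrix.mulVec, dotProduct, Fin.sum_univ_two]
  have hT1 : ∀ w : Fin 2 → ℝ, (Tmat n 0 m *ᵥ w) 1 = (m:ℝ) * w 1 := by
    intro w
    simp [Tmat, Matrix.mulVec, dotProduct, Fin.sum_univ_two]
  -- digit bounds, as reals
  have hdig : ∀ d ∈ D, (0:ℝ) ≤ (d 0:ℝ) ∧ (d 0:ℝ) ≤ (n:ℝ) - 1 ∧
      (0:ℝ) ≤ (d 1:ℝ) ∧ (d 1:ℝ) ≤ (m:ℝ) - 1 := by
    intro d hd
    obtain ⟨h1, h2, h3, h4⟩ := hDS d hd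
    rw [abs_of_pos (by omega)] at h2
    rw [abs_of_pos (by omega)] at h4
    refine ⟨by exact_mod_cast h1, by exact_mod_cast h2, by exact_mod_cast h3,
      by exact_mod_cast h4⟩
  -- one-step decomposition
  have step0 : ∀ x ∈ F, ∃ x' ∈ F, ∃ d ∈ D,
      (n:ℝ) * x 0 = x' 0 + (d 0 : ℝ) ∧ (m:ℝ) * x 1 = x' 1 + (d 1 : ℝ) := by
    intro x hx
    rw [hfix] at hx
    simp only [Set.mem_iUnion, Set.mem_image] at hx
    obtain ⟨d, hd, x', hx', heq⟩ := hx
    have hw : Tmat n 0 m *ᵥ x = x' + castVec d := by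
      rw [← heq]; exact hTT _
    refine ⟨x', hx', d, hd, ?_, ?_⟩
    · have h := congrFun hw 0
      rw [hT0] at h
      simpa [castVec] using h
    · have h := congrFun hw 1
      rw [hT1] at h
      simpa [castVec] using h
  -- F is contained in the unit square
  have gen : ∀ (c : ℝ) (g : (Fin 2 → ℝ) → ℝ), 2 ≤ c → Continuous g →
      (∀ x ∈ F, ∃ x' ∈ F, ∃ r : ℝ, 0 ≤ r ∧ r ≤ c - 1 ∧ c * g x = g x' + r) →
      ∀ x ∈ F, 0 ≤ g x ∧ g x ≤ 1 := by
    intro c g hc hg hstep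
    obtain ⟨p, hpF, hpmax⟩ := hcpt.exists_isMaxOn hne hg.continuousOn
    obtain ⟨u, huF, humin⟩ := hcpt.exists_isMinOn hne hg.continuousOn
    have h1 : g p ≤ 1 := by
      obtain ⟨p', hp', r, hr0, hr1, heq⟩ := hstep p hpF
      have h := isMaxOn_iff.mp hpmax p' hp'
      nlinarith
    have h2 : 0 ≤ g u := by
      obtain ⟨u', hu', r, hr0, hr1, heq⟩ := hstep u huF
      have h := isMinOn_iff.mp humin u' hu'
      nlinarith
    intro x hx
    exact ⟨h2.trans (isMinOn_iff.mp humin x hx), (isMaxOn_iff.mp hpmax x hx).trans h1⟩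
  have bound0 : ∀ x ∈ F, 0 ≤ x 0 ∧ x 0 ≤ 1 := by
    refine gen (n:ℝ) (fun x => x 0) hnR (continuous_apply 0) ?_
    intro x hx
    obtain ⟨x', hx', d, hd, h0, _⟩ := step0 x hx
    obtain ⟨hd1, hd2, _, _⟩ := hdig d hd
    exact ⟨x', hx', (d 0 : ℝ), hd1, hd2, h0⟩
  have bound1 : ∀ x ∈ F, 0 ≤ x 1 ∧ x 1 ≤ 1 := by
    refine gen (m:ℝ) (fun x => x 1) hmR (continuous_apply 1) ?_
    intro x hx
    obtain ⟨x', hx', d, hd, _, h1⟩ := step0 x hx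
    obtain ⟨_, _, hd3, hd4⟩ := hdig d hd
    exact ⟨x', hx', (d 1 : ℝ), hd3, hd4, h1⟩
  -- combined two-point step
  have step2 : ∀ x ∈ F, ∀ y ∈ F, ∃ x' ∈ F, ∃ y' ∈ F, ∃ p q : ℤ,
      InDelta D ![p, q] ∧ (p:ℝ) ≤ (n:ℝ) - 1 ∧ (q:ℝ) ≤ (m:ℝ) - 1 ∧ -((m:ℝ) - 1) ≤ (q:ℝ) ∧
      (n:ℝ) * (x 0 - y 0) = (x' 0 - y' 0) + (p:ℝ) ∧
      (m:ℝ) * (x 1 - y 1) = (x' 1 - y' 1) + (q:ℝ) := by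
    intro x hx y hy
    obtain ⟨x', hx', d, hd, hdx0, hdx1⟩ := step0 x hx
    obtain ⟨y', hy', e, he, hey0, hey1⟩ := step0 y hy
    obtain ⟨hd1, hd2, hd3, hd4⟩ := hdig d hd
    obtain ⟨he1, he2, he3, he4⟩ := hdig e he
    refine ⟨x', hx', y', hy', d 0 - e 0, d 1 - e 1, ⟨d, hd, e, he, ?_⟩, ?_, ?_, ?_, ?_, ?_⟩
    · funext i; fin_cases i <;> simp
    · push_cast; linarith
    · push_cast; linarith
    · push_cast; linarith
    · push_cast; linarith
    · push_cast; linarith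
  -- the four forbidden differences
  have L2 : ∀ x ∈ F, ∀ y ∈ F, x 0 - y 0 = 1 → x 1 - y 1 = 1 → False := by
    intro x hx y hy e0 e1
    obtain ⟨x', hx', y', hy', p, q, hΔ, hpn, hqm, hqm', h0, h1⟩ := step2 x hx y hy
    rw [e0] at h0; rw [e1] at h1
    obtain ⟨a0, a0'⟩ := bound0 x' hx'; obtain ⟨b0, b0'⟩ := bound0 y' hy'
    obtain ⟨a1, a1'⟩ := bound1 x' hx'; obtain ⟨b1, b1'⟩ := bound1 y' hy'
    have hp : (p:ℝ) = (n:ℝ) - 1 := by linarith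
    have hq2 : (q:ℝ) = (m:ℝ) - 1 := by linarith
    have hp' : p = n - 1 := by exact_mod_cast hp
    have hq' : q = m - 1 := by exact_mod_cast hq2
    apply hb3
    have hv : (![n - 1, m - 1] : Fin 2 → ℤ) = ![p, q] := by rw [hp', hq']
    rw [hv]; exact hΔ
  have L3 : ∀ x ∈ F, ∀ y ∈ F, x 0 - y 0 = 1 → x 1 - y 1 = -1 → False := by
    intro x hx y hy e0 e1
    obtain ⟨x', hx', y', hy', p, q, hΔ, hpn, hqm, hqm', h0, h1⟩ := step2 x hx y hy
    rw [e0] at h0; rw [e1] at h1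
    obtain ⟨a0, a0'⟩ := bound0 x' hx'; obtain ⟨b0, b0'⟩ := bound0 y' hy'
    obtain ⟨a1, a1'⟩ := bound1 x' hx'; obtain ⟨b1, b1'⟩ := bound1 y' hy'
    have hp : (p:ℝ) = (n:ℝ) - 1 := by linarith
    have hq2 : (q:ℝ) = -((m:ℝ) - 1) := by linarith
    have hp' : p = n - 1 := by exact_mod_cast hp
    have hq' : q = -(m - 1) := by exact_mod_cast hq2
    apply hb12
    have hv : ((![n - 1, 0] - ![0, m - 1]) : Fin 2 → ℤ) = ![p, q] := by
      funext i; fin_cases i <;> simp [hp', hq']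
    rw [hv]; exact hΔ
  have L4 : ∀ x ∈ F, ∀ y ∈ F, x 0 - y 0 = 1 → x 1 - y 1 = 0 → False := by
    intro x hx y hy e0 e1
    obtain ⟨x', hx', y', hy', p, q, hΔ, hpn, hqm, hqm', h0, h1⟩ := step2 x hx y hy
    rw [e0] at h0; rw [e1] at h1
    obtain ⟨a0, a0'⟩ := bound0 x' hx'; obtain ⟨b0, b0'⟩ := bound0 y' hy'
    obtain ⟨a1, a1'⟩ := bound1 x' hx'; obtain ⟨b1, b1'⟩ := bound1 y' hy'
    have hx0' : x' 0 - y' 0 = 1 := by linarith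
    have hp : (p:ℝ) = (n:ℝ) - 1 := by linarith
    have hp' : p = n - 1 := by exact_mod_cast hp
    have hqb1 : (-1:ℝ) ≤ (q:ℝ) := by linarith
    have hqb2 : (q:ℝ) ≤ 1 := by linarith
    have hqi1 : (-1:ℤ) ≤ q := by exact_mod_cast hqb1
    have hqi2 : q ≤ 1 := by exact_mod_cast hqb2
    have hqc : q = -1 ∨ q = 0 ∨ q = 1 := by omega
    rcases hqc with hq' | hq' | hq'
    · refine L2 x' hx' y' hy' hx0' ?_
      rw [hq'] at h1; push_cast at h1; linarith
    · apply hb1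
      have hv : (![n - 1, 0] : Fin 2 → ℤ) = ![p, q] := by rw [hp', hq']
      rw [hv]; exact hΔ
    · refine L3 x' hx' y' hy' hx0' ?_
      rw [hq'] at h1; push_cast at h1; linarith
  have L5 : ∀ x ∈ F, ∀ y ∈ F, x 0 - y 0 = 0 → x 1 - y 1 = 1 → False := by
    intro x hx y hy e0 e1
    obtain ⟨x', hx', y', hy', p, q, hΔ, hpn, hqm, hqm', h0, h1⟩ := step2 x hx y hy
    rw [e0] at h0; rw [e1] at h1
    obtain ⟨a0, a0'⟩ := bound0 x' hx'; obtain ⟨b0, b0'⟩ := bound0 y' hy'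
    obtain ⟨a1, a1'⟩ := bound1 x' hx'; obtain ⟨b1, b1'⟩ := bound1 y' hy'
    have hx1' : x' 1 - y' 1 = 1 := by linarith
    have hq2 : (q:ℝ) = (m:ℝ) - 1 := by linarith
    have hq' : q = m - 1 := by exact_mod_cast hq2
    have hpb1 : (-1:ℝ) ≤ (p:ℝ) := by linarith
    have hpb2 : (p:ℝ) ≤ 1 := by linarith
    have hpi1 : (-1:ℤ) ≤ p := by exact_mod_cast hpb1
    have hpi2 : p ≤ 1 := by exact_mod_cast hpb2
    have hpc : p = -1 ∨ p = 0 ∨ p = 1 := by omega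
    rcases hpc with hp' | hp' | hp'
    · refine L2 x' hx' y' hy' ?_ hx1'
      rw [hp'] at h0; push_cast at h0; linarith
    · apply hb2
      have hv : (![0, m - 1] : Fin 2 → ℤ) = ![p, q] := by rw [hp', hq']
      rw [hv]; exact hΔ
    · refine L3 y' hy' x' hx' ?_ ?_
      · rw [hp'] at h0; push_cast at h0; linarith
      · linarith
  -- no two distinct digit-pieces can intersect
  have hnoedge : ∀ x ∈ F, ∀ y ∈ F, ∀ g : Fin 2 → ℤ, g ≠ 0 →
      x 0 - y 0 = ((g 0 : ℤ) : ℝ) → x 1 - y 1 = ((g 1 : ℤ) : ℝ) → False := by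
    intro x hx y hy g hg e0 e1
    obtain ⟨a0, a0'⟩ := bound0 x hx; obtain ⟨b0, b0'⟩ := bound0 y hy
    obtain ⟨a1, a1'⟩ := bound1 x hx; obtain ⟨b1, b1'⟩ := bound1 y hy
    have hg01 : ((g 0 : ℤ) : ℝ) ≤ 1 := by linarith
    have hg02 : (-1 : ℝ) ≤ ((g 0 : ℤ) : ℝ) := by linarith
    have hg11 : ((g 1 : ℤ) : ℝ) ≤ 1 := by linarith
    have hg12 : (-1 : ℝ) ≤ ((g 1 : ℤ) : ℝ) := by linarith
    have hi01 : g 0 ≤ 1 := by exact_mod_cast hg01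
    have hi02 : -1 ≤ g 0 := by exact_mod_cast hg02
    have hi11 : g 1 ≤ 1 := by exact_mod_cast hg11
    have hi12 : -1 ≤ g 1 := by exact_mod_cast hg12
    have hgne : ¬ (g 0 = 0 ∧ g 1 = 0) := by
      rintro ⟨h0, h1⟩
      apply hg
      funext i; fin_cases i
      · exact h0
      · exact h1
    have hc0 : g 0 = -1 ∨ g 0 = 0 ∨ g 0 = 1 := by omega
    have hc1 : g 1 = -1 ∨ g 1 = 0 ∨ g 1 = 1 := by omega
    rcases hc0 with h0 | h0 | h0 <;> rcases hc1 with h1 | h1 | h1 <;>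
        rw [h0] at e0 <;> rw [h1] at e1 <;> push_cast at e0 e1
    · exact L2 y hy x hx (by linarith) (by linarith)
    · exact L4 y hy x hx (by linarith) (by linarith)
    · exact L3 y hy x hx (by linarith) (by linarith)
    · exact L5 y hy x hx (by linarith) (by linarith)
    · exact hgne ⟨h0, h1⟩
    · exact L5 x hx y hy (by linarith) (by linarith)
    · exact L3 x hx y hy (by linarith) (by linarith)
    · exact L4 x hx y hy (by linarith) (by linarith)
    · exact L2 x hx y hy (by linarith) (by linarith)
  -- topological conclusion
  obtain ⟨a₀, ha₀⟩ := Finset.card_pos.mp (by omega : 0 < D.card)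
  have hcont : ∀ d : Fin 2 → ℤ,
      Continuous (fun x : Fin 2 → ℝ => (Tmat n 0 m)⁻¹ *ᵥ (x + castVec d)) := by
    intro d
    have h1 : Continuous fun w : Fin 2 → ℝ => (Tmat n 0 m)⁻¹ *ᵥ w := by
      have h2 := LinearMap.continuous_of_finiteDimensional
        (𝕜 := ℝ) ((Tmat n 0 m)⁻¹).mulVecLin
      exact h2
    exact h1.comp (continuous_id.add continuous_const)
  set B := D.erase a₀ with hB
  have hBne : B.Nonempty := by
    rw [← Finset.card_pos, hB, Finset.card_erase_of_mem ha₀]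
    omega
  set K1 : Set (Fin 2 → ℝ) :=
    (fun x => (Tmat n 0 m)⁻¹ *ᵥ (x + castVec a₀)) '' F with hK1
  set K2 : Set (Fin 2 → ℝ) :=
    ⋃ b ∈ B, (fun x => (Tmat n 0 m)⁻¹ *ᵥ (x + castVec b)) '' F with hK2
  have hK1c : IsCompact K1 := hcpt.image (hcont a₀)
  have hK2c : IsCompact K2 :=
    B.finite_toSet.isCompact_biUnion (fun b _ => hcpt.image (hcont b))
  have hcover : F = K1 ∪ K2 := by
    conv_lhs => rw [hfix]
    rw [← Finset.insert_erase ha₀, Finset.set_biUnion_insert]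
  have hdisj : Disjoint K1 K2 := by
    rw [Set.disjoint_left]
    rintro z ⟨x, hx, hzx⟩ hz2
    simp only [hK2, Set.mem_iUnion, Set.mem_image] at hz2
    obtain ⟨b, hbB, y, hy, hzy⟩ := hz2
    have hba : b ≠ a₀ := Finset.ne_of_mem_erase hbB
    have heq : x + castVec a₀ = y + castVec b := by
      have h := congrArg (fun w => Tmat n 0 m *ᵥ w) (hzx.trans hzy.symm)
      simp only [hTT] at h
      exact h
    refine hnoedge x hx y hy (b - a₀) (sub_ne_zero.mpr hba) ?_ ?_
    · have h := congrFun heq 0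
      simp only [Pi.add_apply, castVec] at h
      rw [Pi.sub_apply]
      push_cast
      linarith
    · have h := congrFun heq 1
      simp only [Pi.add_apply, castVec] at h
      rw [Pi.sub_apply]
      push_cast
      linarith
  obtain ⟨U, V, hU, hV, hK1U, hK2V, hUV⟩ :=
    SeparatedNhds.of_isCompact_isCompact hK1c hK2c hdisj
  have hK1F : K1 ⊆ F := by rw [hcover]; exact Set.subset_union_left
  have hK2F : K2 ⊆ F := by rw [hcover]; exact Set.subset_union_right
  have hK1ne : K1.Nonempty := hne.image _
  have hK2ne : K2.Nonempty := by
    obtain ⟨w, hw⟩ := hne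
    obtain ⟨b, hb⟩ := hBne
    exact ⟨_, Set.mem_biUnion hb ⟨w, hw, rfl⟩⟩
  obtain ⟨x₁, hx₁⟩ := hK1ne
  obtain ⟨x₂, hx₂⟩ := hK2ne
  have hsub : F ⊆ U ∪ V := by
    rw [hcover]; exact Set.union_subset_union hK1U hK2V
  obtain ⟨z, hzF, hzU, hzV⟩ := hconn.isPreconnected U V hU hV hsub
    ⟨x₁, hK1F hx₁, hK1U hx₁⟩ ⟨x₂, hK2F hx₂, hK2V hx₂⟩
  exact Set.disjoint_left.mp hUV hzU hzV
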